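/- Consider a process on a finite vertex set that, in each round, selects a center u in the current set U, finds the minimum positive integer h with |Ball_U(u, h·step)| < n^{h/k}, adds at most 2·|Ball_U(u,h·step)| ≤ 2n^{h/k} tree edges, and removes the set B̄ = {v ∈ U : d_U(u⇆v) ≤ (h-1)·step} (which has size ≥ n^{(h-1)/k} and contains u) from U. Then the total number of edges added over all rounds is at most 2·n^{1/k}·n = O(n^{1+1/k}). -/

import Mathlib

/-- Size bound for the ball-growing process: over `T` rounds on an `n`-vertex set, round
`i` picks an integer `h i ≥ 1`, adds `e i ≤ 2·n^{h i/k}` tree edges, and removes a set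
`B i` of size at least `n^{(h i - 1)/k}`; the removed sets are pairwise disjoint. Then the
total number of edges added over all rounds is at most `2·n^{1/k}·n = O(n^{1+1/k})`. -/
theorem cover_size_bound {V : Type*} [Fintype V] [DecidableEq V]
    (k : ℕ) (hk : 1 ≤ k) (T : ℕ)
    (h : Fin T → ℕ) (hh : ∀ i, 1 ≤ h i)
    (B : Fin T → Finset V)
    (hdisj : ∀ i j, i ≠ j → Disjoint (B i) (B j))
    (hB : ∀ i, (Fintype.card V : ℝ) ^ (((h i : ℝ) - 1) / (k : ℝ)) ≤ ((B i).card : ℝ))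
    (e : Fin T → ℕ)
    (he : ∀ i, (e i : ℝ) ≤ 2 * (Fintype.card V : ℝ) ^ ((h i : ℝ) / (k : ℝ))) :
    (∑ i, (e i : ℝ)) ≤ 2 * (Fintype.card V : ℝ) ^ ((1 : ℝ) / (k : ℝ)) * Fintype.card V := by
  have hk' : (0:ℝ) < (k:ℝ) := by exact_mod_cast hk
  have hn0 : (0:ℝ) ≤ (Fintype.card V : ℝ) := Nat.cast_nonneg _
  rcases hn0.eq_or_lt with h0 | hpos
  · -- card V = 0
    have hz : ∀ i, (e i : ℝ) ≤ 0 := by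
      intro i
      have hx : ((h i : ℝ) / (k:ℝ)) ≠ 0 := by
        have : (0:ℝ) < (h i : ℝ) := by exact_mod_cast hh i
        positivity
      have := he i
      rw [← h0, Real.zero_rpow hx] at this
      linarith
    have : (∑ i, (e i : ℝ)) ≤ 0 := Finset.sum_nonpos fun i _ => hz i
    have hr : ((Fintype.card V : ℝ)) = 0 := h0.symm
    rw [hr]
    simpa using this
  · -- card V > 0
    have hsum : (∑ i, ((B i).card : ℝ)) ≤ (Fintype.card V : ℝ) := by
      have hcard : (Finset.univ.biUnion B).card = ∑ i, (B i).card :=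
        Finset.card_biUnion (fun i _ j _ hij => hdisj i j hij)
      have hle : (Finset.univ.biUnion B).card ≤ Fintype.card V :=
        Finset.card_le_card (Finset.subset_univ _)
      exact_mod_cast hcard ▸ hle
    have step : ∀ i, (e i : ℝ) ≤
        2 * (Fintype.card V : ℝ) ^ ((1:ℝ)/(k:ℝ)) * ((B i).card : ℝ) := by
      intro i
      have hsplit : ((h i : ℝ) / (k:ℝ)) = (1:ℝ)/(k:ℝ) + ((h i : ℝ) - 1)/(k:ℝ) := by
        field_simp
        ring
      have : (Fintype.card V : ℝ) ^ ((h i : ℝ)/(k:ℝ)) =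
          (Fintype.card V : ℝ) ^ ((1:ℝ)/(k:ℝ)) *
          (Fintype.card V : ℝ) ^ (((h i : ℝ) - 1)/(k:ℝ)) := by
        rw [hsplit, Real.rpow_add hpos]
      have h1 : (e i : ℝ) ≤ 2 * ((Fintype.card V : ℝ) ^ ((1:ℝ)/(k:ℝ)) *
          (Fintype.card V : ℝ) ^ (((h i : ℝ) - 1)/(k:ℝ))) := by
        rw [← this]; exact he i
      have h2 : (Fintype.card V : ℝ) ^ (((h i : ℝ) - 1)/(k:ℝ)) ≤ ((B i).card : ℝ) := hB i
      have hpow : (0:ℝ) ≤ (Fintype.card V : ℝ) ^ ((1:ℝ)/(k:ℝ)) :=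
        Real.rpow_nonneg hn0 _
      nlinarith [mul_le_mul_of_nonneg_left h2 hpow]
    calc (∑ i, (e i : ℝ))
        ≤ ∑ i, 2 * (Fintype.card V : ℝ) ^ ((1:ℝ)/(k:ℝ)) * ((B i).card : ℝ) :=
          Finset.sum_le_sum fun i _ => step i
      _ = 2 * (Fintype.card V : ℝ) ^ ((1:ℝ)/(k:ℝ)) * ∑ i, ((B i).card : ℝ) := by
          rw [← Finset.mul_sum]
      _ ≤ 2 * (Fintype.card V : ℝ) ^ ((1:ℝ)/(k:ℝ)) * (Fintype.card V : ℝ) := by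
          apply mul_le_mul_of_nonneg_left hsum
          positivity
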